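/- The special linear group SL(2,3) is solvable but not metabelian, and it satisfies |{x ∈ SL(2,3) : x^m = 1}| ≤ m² for every divisor m of its exponent 12; that is, SL(2,3) is a solvable non-metabelian Q-group. -/

import Mathlib

set_option maxHeartbeats 4000000

open scoped commutatorElement

namespace SL23Aux

abbrev G := Matrix.SpecialLinearGroup (Fin 2) (ZMod 3)

instance : DecidableEq G := fun a b => decidable_of_iff (a.1 = b.1) Subtype.ext_iff.symm

lemma comm4 : ∀ a b : G, ⁅a, b⁆ ^ 4 = 1 := by decide

lemma q8mul : ∀ a b : G, a ^ 4 = 1 → b ^ 4 = 1 → (a * b) ^ 4 = 1 := by decide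

lemma q8inv : ∀ a : G, a ^ 4 = 1 → a⁻¹ ^ 4 = 1 := by decide

lemma q8comm : ∀ a b : G, a ^ 4 = 1 → b ^ 4 = 1 → ⁅a, b⁆ ^ 2 = 1 := by decide

lemma z2mul : ∀ a b : G, a ^ 2 = 1 → b ^ 2 = 1 → (a * b) ^ 2 = 1 := by decide

lemma z2inv : ∀ a : G, a ^ 2 = 1 → a⁻¹ ^ 2 = 1 := by decide

lemma z2comm : ∀ a b : G, a ^ 2 = 1 → b ^ 2 = 1 → ⁅a, b⁆ = 1 := by decide

def Q8 : Subgroup G where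
  carrier := {x | x ^ 4 = 1}
  one_mem' := by decide
  mul_mem' := fun {a b} ha hb => q8mul a b ha hb
  inv_mem' := fun {a} ha => q8inv a ha

def Z2 : Subgroup G where
  carrier := {x | x ^ 2 = 1}
  one_mem' := by decide
  mul_mem' := fun {a b} ha hb => z2mul a b ha hb
  inv_mem' := fun {a} ha => z2inv a ha

lemma solvableG : IsSolvable G := by
  refine ⟨⟨3, le_bot_iff.mp ?_⟩⟩
  have h1 : derivedSeries G 1 ≤ Q8 := by
    rw [derivedSeries_succ, derivedSeries_zero]
    exact Subgroup.commutator_le.mpr fun a _ b _ => comm4 a b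
  have h2 : derivedSeries G 2 ≤ Z2 := by
    rw [derivedSeries_succ]
    exact le_trans (Subgroup.commutator_mono h1 h1)
      (Subgroup.commutator_le.mpr fun a ha b hb => q8comm a b ha hb)
  show derivedSeries G (2+1) ≤ ⊥
  rw [derivedSeries_succ]
  exact le_trans (Subgroup.commutator_mono h2 h2)
    (Subgroup.commutator_le.mpr fun a ha b hb => by
      simpa [Subgroup.mem_bot] using z2comm a b ha hb)

def a : G := ⟨!![1, 1; 0, 1], by decide⟩
def b : G := ⟨!![1, 0; 1, 1], by decide⟩
def d : G := ⟨!![1, 0; 2, 1], by decide⟩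

lemma pow12 : ∀ g : G, g ^ 12 = 1 := by decide

end SL23Aux

theorem sl2_3_solvable_nonmetabelian_Q_group :
    IsSolvable (Matrix.SpecialLinearGroup (Fin 2) (ZMod 3)) ∧
    ¬ (∀ x y : ↥(commutator (Matrix.SpecialLinearGroup (Fin 2) (ZMod 3))), x * y = y * x) ∧
    (∀ m : ℕ, m ∣ Monoid.exponent (Matrix.SpecialLinearGroup (Fin 2) (ZMod 3)) →
      Nat.card {x : Matrix.SpecialLinearGroup (Fin 2) (ZMod 3) // x ^ m = 1} ≤ m ^ 2) := by
  open SL23Aux in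
  refine ⟨solvableG, ?_, ?_⟩
  · intro h
    have hx : ⁅a, b⁆ ∈ commutator G :=
      Subgroup.commutator_mem_commutator (Subgroup.mem_top a) (Subgroup.mem_top b)
    have hy : ⁅a, d⁆ ∈ commutator G :=
      Subgroup.commutator_mem_commutator (Subgroup.mem_top a) (Subgroup.mem_top d)
    have := congrArg Subtype.val (h ⟨⁅a, b⁆, hx⟩ ⟨⁅a, d⁆, hy⟩)
    have hne : ⁅a, b⁆ * ⁅a, d⁆ ≠ ⁅a, d⁆ * ⁅a, b⁆ := by decide
    exact hne this
  · intro m hm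
    have hdvd : m ∣ 12 := hm.trans (Monoid.exponent_dvd_of_forall_pow_eq_one pow12)
    have hmem : m ∈ Nat.divisors 12 := Nat.mem_divisors.mpr ⟨hdvd, by norm_num⟩
    fin_cases hmem <;>
      · rw [Nat.card_eq_fintype_card]
        decide
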